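/- arXiv:1508.03110 — 2 statements merged into one kernel-verified Lean document; each statement's English description precedes it below -/
import Mathlib

section
/- For fixed M, the function U ↦ L(R,U,M) is a strictly convex quadratic function of the entries of U whenever λ > 0 and every user has rated at least one movie, and therefore it has a unique global minimizer, given column-wise by u_i = (M_{I_i} M_{I_i}^T + λ n_{u_i} I)^{-1} M_{I_i} R(i,I_i)^T. -/
open Finset Filter

noncomputable section

/-- Dot product of two factor vectors in ℝ^{n_f}. -/
def dotp {nf : ℕ} (x y : Fin nf → ℝ) : ℝ := ∑ k, x k * y k

/-- Number of ratings by user `i` (n_{u_i} = |I_i|). -/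
def nRatU {nu nm : ℕ} (I : Finset (Fin nu × Fin nm)) (i : Fin nu) : ℕ :=
  (I.filter (fun p => p.1 = i)).card

/-- Number of ratings of movie `j` (n_{m_j}). -/
def nRatM {nu nm : ℕ} (I : Finset (Fin nu × Fin nm)) (j : Fin nm) : ℕ :=
  (I.filter (fun p => p.2 = j)).card

/-- Regularized squared loss L(R,U,M). -/
def loss {nf nu nm : ℕ} (lam : ℝ) (R : Fin nu → Fin nm → ℝ)
    (I : Finset (Fin nu × Fin nm))
    (U : Fin nu → Fin nf → ℝ) (M : Fin nm → Fin nf → ℝ) : ℝ :=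
  (∑ p ∈ I, (R p.1 p.2 - dotp (U p.1) (M p.2)) ^ 2)
  + lam * ((∑ i, (nRatU I i : ℝ) * dotp (U i) (U i))
         + (∑ j, (nRatM I j : ℝ) * dotp (M j) (M j)))

namespace Stmt2Aux

variable {nf nu nm : ℕ}

lemma dotp_add_left' (x y z : Fin nf → ℝ) : dotp (x + y) z = dotp x z + dotp y z := by
  simp [dotp, add_mul, Finset.sum_add_distrib]

lemma dotp_self_add (x y : Fin nf → ℝ) :
    dotp (x + y) (x + y) = dotp x x + (2 * dotp x y + dotp y y) := by
  simp only [dotp, Pi.add_apply, Finset.mul_sum, ← Finset.sum_add_distrib]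
  exact Finset.sum_congr rfl fun k _ => by ring

lemma dotp_smul_left (c : ℝ) (x z : Fin nf → ℝ) : dotp (c • x) z = c * dotp x z := by
  simp [dotp, Finset.mul_sum, mul_assoc]

lemma dotp_nonneg (x : Fin nf → ℝ) : 0 ≤ dotp x x :=
  Finset.sum_nonneg fun k _ => mul_self_nonneg _

lemma dotp_pos {x : Fin nf → ℝ} (hx : x ≠ 0) : 0 < dotp x x := by
  obtain ⟨k, hk⟩ : ∃ k, x k ≠ 0 := by
    by_contra h; push_neg at h; exact hx (funext h)
  exact Finset.sum_pos' (fun l _ => mul_self_nonneg _)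
    ⟨k, Finset.mem_univ k, mul_self_pos.mpr hk⟩

/-- half-gradient of the loss w.r.t. `U i k` -/
def grad (lam : ℝ) (R : Fin nu → Fin nm → ℝ) (I : Finset (Fin nu × Fin nm))
    (M : Fin nm → Fin nf → ℝ) (U : Fin nu → Fin nf → ℝ) (i : Fin nu) (k : Fin nf) : ℝ :=
  (∑ p ∈ I.filter (fun p => p.1 = i), M p.2 k * dotp (U i) (M p.2))
    + lam * (nRatU I i : ℝ) * U i k
    - ∑ p ∈ I.filter (fun p => p.1 = i), M p.2 k * R i p.2

/-- the quadratic form appearing in the second-order expansion -/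
def Kq (lam : ℝ) (I : Finset (Fin nu × Fin nm)) (M : Fin nm → Fin nf → ℝ)
    (D : Fin nu → Fin nf → ℝ) : ℝ :=
  (∑ p ∈ I, (dotp (D p.1) (M p.2)) ^ 2) + lam * ∑ i, (nRatU I i : ℝ) * dotp (D i) (D i)

lemma Kq_nonneg (lam : ℝ) (hlam : 0 ≤ lam) (I : Finset (Fin nu × Fin nm))
    (M : Fin nm → Fin nf → ℝ) (D : Fin nu → Fin nf → ℝ) : 0 ≤ Kq lam I M D := by
  have h1 : (0:ℝ) ≤ ∑ p ∈ I, (dotp (D p.1) (M p.2)) ^ 2 :=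
    Finset.sum_nonneg fun p _ => sq_nonneg _
  have h2 : (0:ℝ) ≤ ∑ i, (nRatU I i : ℝ) * dotp (D i) (D i) :=
    Finset.sum_nonneg fun i _ => mul_nonneg (Nat.cast_nonneg _) (dotp_nonneg _)
  have := mul_nonneg hlam h2
  unfold Kq; linarith

lemma Kq_pos (lam : ℝ) (hlam : 0 < lam) (I : Finset (Fin nu × Fin nm))
    (M : Fin nm → Fin nf → ℝ) (hrated : ∀ i : Fin nu, 1 ≤ nRatU I i)
    {D : Fin nu → Fin nf → ℝ} (hD : D ≠ 0) : 0 < Kq lam I M D := by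
  obtain ⟨i0, hi0⟩ : ∃ i, D i ≠ 0 := by
    by_contra h; push_neg at h; exact hD (funext h)
  have h1 : (0:ℝ) ≤ ∑ p ∈ I, (dotp (D p.1) (M p.2)) ^ 2 :=
    Finset.sum_nonneg fun p _ => sq_nonneg _
  have h2 : (0:ℝ) < ∑ i, (nRatU I i : ℝ) * dotp (D i) (D i) := by
    refine Finset.sum_pos' (fun i _ => mul_nonneg (Nat.cast_nonneg _) (dotp_nonneg _))
      ⟨i0, Finset.mem_univ i0, mul_pos ?_ (dotp_pos hi0)⟩
    exact_mod_cast Nat.lt_of_lt_of_le Nat.zero_lt_one (hrated i0)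
  have := mul_pos hlam h2
  unfold Kq; linarith

lemma step1 (lam : ℝ) (R : Fin nu → Fin nm → ℝ) (I : Finset (Fin nu × Fin nm))
    (M : Fin nm → Fin nf → ℝ) (U D : Fin nu → Fin nf → ℝ) (i : Fin nu) :
    ∑ k, D i k * grad lam R I M U i k
      = (∑ p ∈ I.filter (fun p => p.1 = i),
          (dotp (U i) (M p.2) - R i p.2) * dotp (D i) (M p.2))
        + lam * ((nRatU I i : ℝ) * dotp (U i) (D i)) := by
  have hk : ∀ k, D i k * grad lam R I M U i k
      = (∑ p ∈ I.filter (fun p => p.1 = i),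
          (dotp (U i) (M p.2) - R i p.2) * (D i k * M p.2 k))
        + lam * ((nRatU I i : ℝ) * (U i k * D i k)) := by
    intro k
    unfold grad
    rw [show (∑ p ∈ I.filter (fun p => p.1 = i), M p.2 k * dotp (U i) (M p.2))
          + lam * (nRatU I i : ℝ) * U i k
          - ∑ p ∈ I.filter (fun p => p.1 = i), M p.2 k * R i p.2
        = ((∑ p ∈ I.filter (fun p => p.1 = i), M p.2 k * dotp (U i) (M p.2))
            - ∑ p ∈ I.filter (fun p => p.1 = i), M p.2 k * R i p.2)
          + lam * (nRatU I i : ℝ) * U i k from by ring,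
      ← Finset.sum_sub_distrib, mul_add, Finset.mul_sum]
    congr 1
    · exact Finset.sum_congr rfl fun p _ => by ring
    · ring
  rw [Finset.sum_congr rfl fun k _ => hk k, Finset.sum_add_distrib]
  congr 1
  · rw [Finset.sum_comm]
    exact Finset.sum_congr rfl fun p _ => by
      rw [← Finset.mul_sum]; rfl
  · rw [← Finset.mul_sum, ← Finset.mul_sum]; rfl

lemma fiber (I : Finset (Fin nu × Fin nm)) (f : Fin nu × Fin nm → ℝ) :
    ∑ i, ∑ p ∈ I.filter (fun p => p.1 = i), f p = ∑ p ∈ I, f p :=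
  Finset.sum_fiberwise I Prod.fst f

lemma sum_grad_eq (lam : ℝ) (R : Fin nu → Fin nm → ℝ) (I : Finset (Fin nu × Fin nm))
    (M : Fin nm → Fin nf → ℝ) (U D : Fin nu → Fin nf → ℝ) :
    ∑ i, ∑ k, D i k * grad lam R I M U i k
      = (∑ p ∈ I, (dotp (U p.1) (M p.2) - R p.1 p.2) * dotp (D p.1) (M p.2))
        + lam * ∑ i, (nRatU I i : ℝ) * dotp (U i) (D i) := by
  rw [Finset.sum_congr rfl fun i _ => step1 lam R I M U D i, Finset.sum_add_distrib,
    ← Finset.mul_sum]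
  congr 1
  rw [← fiber I (fun p => (dotp (U p.1) (M p.2) - R p.1 p.2) * dotp (D p.1) (M p.2))]
  refine Finset.sum_congr rfl fun i _ => Finset.sum_congr rfl fun p hp => ?_
  have : p.1 = i := (Finset.mem_filter.mp hp).2
  rw [this]

lemma expansion (lam : ℝ) (R : Fin nu → Fin nm → ℝ) (I : Finset (Fin nu × Fin nm))
    (M : Fin nm → Fin nf → ℝ) (U D : Fin nu → Fin nf → ℝ) :
    loss lam R I (U + D) M
      = loss lam R I U M + 2 * (∑ i, ∑ k, D i k * grad lam R I M U i k)
        + Kq lam I M D := by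
  rw [sum_grad_eq]
  have h1 : (∑ p ∈ I, (R p.1 p.2 - dotp ((U + D) p.1) (M p.2)) ^ 2)
      = (∑ p ∈ I, (R p.1 p.2 - dotp (U p.1) (M p.2)) ^ 2)
        + (2 * ∑ p ∈ I, (dotp (U p.1) (M p.2) - R p.1 p.2) * dotp (D p.1) (M p.2)
          + ∑ p ∈ I, (dotp (D p.1) (M p.2)) ^ 2) := by
    rw [Finset.mul_sum, ← Finset.sum_add_distrib, ← Finset.sum_add_distrib]
    refine Finset.sum_congr rfl fun p _ => ?_
    have e : dotp ((U + D) p.1) (M p.2) = dotp (U p.1) (M p.2) + dotp (D p.1) (M p.2) :=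
      dotp_add_left' (U p.1) (D p.1) (M p.2)
    rw [e]; ring
  have h3 : ∑ i, (nRatU I i : ℝ) * dotp ((U + D) i) ((U + D) i)
      = (∑ i, (nRatU I i : ℝ) * dotp (U i) (U i))
        + (2 * ∑ i, (nRatU I i : ℝ) * dotp (U i) (D i)
          + ∑ i, (nRatU I i : ℝ) * dotp (D i) (D i)) := by
    rw [Finset.mul_sum, ← Finset.sum_add_distrib, ← Finset.sum_add_distrib]
    refine Finset.sum_congr rfl fun i _ => ?_
    have e : dotp ((U + D) i) ((U + D) i)
        = dotp (U i) (U i) + (2 * dotp (U i) (D i) + dotp (D i) (D i)) :=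
      dotp_self_add (U i) (D i)
    rw [e]; ring
  unfold loss Kq
  rw [h1, h3]
  ring

lemma grad_sum_smul (lam : ℝ) (R : Fin nu → Fin nm → ℝ) (I : Finset (Fin nu × Fin nm))
    (M : Fin nm → Fin nf → ℝ) (U D : Fin nu → Fin nf → ℝ) (b : ℝ) :
    ∑ i, ∑ k, (b • D) i k * grad lam R I M U i k
      = b * ∑ i, ∑ k, D i k * grad lam R I M U i k := by
  rw [Finset.mul_sum]
  refine Finset.sum_congr rfl fun i _ => ?_
  rw [Finset.mul_sum]
  exact Finset.sum_congr rfl fun k _ => by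
    simp only [Pi.smul_apply, smul_eq_mul]; ring

lemma Kq_smul (lam : ℝ) (I : Finset (Fin nu × Fin nm)) (M : Fin nm → Fin nf → ℝ)
    (D : Fin nu → Fin nf → ℝ) (b : ℝ) :
    Kq lam I M (b • D) = b ^ 2 * Kq lam I M D := by
  unfold Kq
  have e1 : ∀ p : Fin nu × Fin nm, dotp ((b • D) p.1) (M p.2) = b * dotp (D p.1) (M p.2) :=
    fun p => dotp_smul_left b (D p.1) (M p.2)
  have e2 : ∀ i, dotp ((b • D) i) ((b • D) i) = b ^ 2 * dotp (D i) (D i) := by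
    intro i
    rw [show (b • D) i = b • (D i) from rfl, dotp_smul_left]
    have : dotp (D i) (b • D i) = b * dotp (D i) (D i) := by
      simp [dotp, Finset.mul_sum]; exact Finset.sum_congr rfl fun k _ => by ring
    rw [this]; ring
  have hA : ∑ p ∈ I, (dotp ((b • D) p.1) (M p.2)) ^ 2
      = b ^ 2 * ∑ p ∈ I, (dotp (D p.1) (M p.2)) ^ 2 := by
    rw [Finset.mul_sum]
    exact Finset.sum_congr rfl fun p _ => by rw [e1 p]; ring
  have hB : ∑ i, (nRatU I i : ℝ) * dotp ((b • D) i) ((b • D) i)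
      = b ^ 2 * ∑ i, (nRatU I i : ℝ) * dotp (D i) (D i) := by
    rw [Finset.mul_sum]
    exact Finset.sum_congr rfl fun i _ => by rw [e2 i]; ring
  rw [hA, hB]; ring

lemma exists_sol (lam : ℝ) (hlam : 0 < lam) (R : Fin nu → Fin nm → ℝ)
    (I : Finset (Fin nu × Fin nm)) (M : Fin nm → Fin nf → ℝ)
    (hrated : ∀ i : Fin nu, 1 ≤ nRatU I i) (i : Fin nu) :
    ∃ u : Fin nf → ℝ, ∀ k,
      (∑ p ∈ I.filter (fun p => p.1 = i), M p.2 k * dotp u (M p.2))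
        + lam * (nRatU I i : ℝ) * u k
      = ∑ p ∈ I.filter (fun p => p.1 = i), M p.2 k * R i p.2 := by
  set F := I.filter (fun p => p.1 = i) with hF
  set A : Matrix (Fin nf) (Fin nf) ℝ :=
    Matrix.of fun k l => (∑ p ∈ F, M p.2 k * M p.2 l)
      + lam * (nRatU I i : ℝ) * (if k = l then 1 else 0) with hAdef
  have hn : (0:ℝ) < (nRatU I i : ℝ) := by
    exact_mod_cast Nat.lt_of_lt_of_le Nat.zero_lt_one (hrated i)
  have hA : ∀ (u : Fin nf → ℝ) (k : Fin nf), A.mulVec u k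
      = (∑ p ∈ F, M p.2 k * dotp u (M p.2)) + lam * (nRatU I i : ℝ) * u k := by
    intro u k
    simp only [Matrix.mulVec, dotProduct, hAdef, Matrix.of_apply]
    rw [Finset.sum_congr rfl fun l (_ : l ∈ Finset.univ) => add_mul
        (∑ p ∈ F, M p.2 k * M p.2 l) (lam * (nRatU I i : ℝ) * (if k = l then 1 else 0)) (u l),
      Finset.sum_add_distrib]
    congr 1
    · rw [Finset.sum_congr rfl fun l (_ : l ∈ Finset.univ) =>
        Finset.sum_mul F (fun p => M p.2 k * M p.2 l) (u l), Finset.sum_comm]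
      refine Finset.sum_congr rfl fun p _ => ?_
      rw [dotp, Finset.mul_sum]
      exact Finset.sum_congr rfl fun l _ => by ring
    · rw [Finset.sum_congr rfl fun l (_ : l ∈ Finset.univ) => (by
          by_cases h : k = l
          · subst h; simp
          · simp [h] :
          lam * (nRatU I i : ℝ) * (if k = l then 1 else 0) * u l
            = if k = l then lam * (nRatU I i : ℝ) * u l else 0)]
      simp
  have hquad : ∀ u : Fin nf → ℝ,
      ∑ k, u k * A.mulVec u k
        = (∑ p ∈ F, (dotp u (M p.2)) ^ 2) + lam * (nRatU I i : ℝ) * dotp u u := by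
    intro u
    rw [Finset.sum_congr rfl fun k (_ : k ∈ Finset.univ) => by rw [hA u k, mul_add],
      Finset.sum_add_distrib]
    congr 1
    · rw [Finset.sum_congr rfl fun k (_ : k ∈ Finset.univ) =>
        Finset.mul_sum F (fun p => M p.2 k * dotp u (M p.2)) (u k), Finset.sum_comm]
      refine Finset.sum_congr rfl fun p _ => ?_
      rw [Finset.sum_congr rfl fun k (_ : k ∈ Finset.univ) => (by ring :
          u k * (M p.2 k * dotp u (M p.2)) = dotp u (M p.2) * (u k * M p.2 k)),
        ← Finset.mul_sum, sq]
      rfl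
    · rw [dotp, Finset.mul_sum]
      exact Finset.sum_congr rfl fun k _ => by ring
  have hker : ∀ u : Fin nf → ℝ, A.mulVec u = 0 → u = 0 := by
    intro u hu
    by_contra hne
    have h0 : ∑ k, u k * A.mulVec u k = 0 := by
      rw [hu]; simp
    rw [hquad u] at h0
    have h1 : (0:ℝ) ≤ ∑ p ∈ F, (dotp u (M p.2)) ^ 2 :=
      Finset.sum_nonneg fun p _ => sq_nonneg _
    have h2 : (0:ℝ) < lam * (nRatU I i : ℝ) * dotp u u :=
      mul_pos (mul_pos hlam hn) (dotp_pos hne)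
    linarith
  have hinj : Function.Injective A.mulVecLin := by
    intro u v huv
    have : A.mulVec (u - v) = 0 := by
      have := map_sub A.mulVecLin u v
      rw [huv, sub_self] at this
      simpa [Matrix.mulVecLin_apply] using this
    exact sub_eq_zero.mp (hker _ this)
  obtain ⟨u, hu⟩ := LinearMap.injective_iff_surjective.mp hinj
    (fun k => ∑ p ∈ F, M p.2 k * R i p.2)
  refine ⟨u, fun k => ?_⟩
  rw [← hA u k]
  have : A.mulVec u = fun k => ∑ p ∈ F, M p.2 k * R i p.2 := by
    rw [← Matrix.mulVecLin_apply, hu]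
  rw [this]

end Stmt2Aux

open Stmt2Aux in
/-- For fixed M, U ↦ L(R,U,M) is strictly convex (λ > 0, every user
has at least one rating), hence has a unique global minimizer, given columnwise by
u_i = (M_{I_i} M_{I_i}^T + λ n_{u_i} I)⁻¹ M_{I_i} R(i,I_i)^T, i.e. the unique
minimizer solves the corresponding linear system for each user. -/
theorem stmt2 {nf nu nm : ℕ} (lam : ℝ) (hlam : 0 < lam)
    (R : Fin nu → Fin nm → ℝ) (I : Finset (Fin nu × Fin nm))
    (M : Fin nm → Fin nf → ℝ) (hrated : ∀ i : Fin nu, 1 ≤ nRatU I i) :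
    StrictConvexOn ℝ Set.univ
      (fun U : Fin nu → Fin nf → ℝ => loss lam R I U M)
    ∧ ∃! Ustar : Fin nu → Fin nf → ℝ,
        (∀ V : Fin nu → Fin nf → ℝ, loss lam R I Ustar M ≤ loss lam R I V M)
        ∧ (∀ (i : Fin nu) (k : Fin nf),
            (∑ p ∈ I.filter (fun p => p.1 = i), M p.2 k * dotp (Ustar i) (M p.2))
              + lam * (nRatU I i : ℝ) * Ustar i k
            = ∑ p ∈ I.filter (fun p => p.1 = i), M p.2 k * R i p.2) := by
  have sc : StrictConvexOn ℝ Set.univ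
      (fun U : Fin nu → Fin nf → ℝ => loss lam R I U M) := by
    refine ⟨convex_univ, ?_⟩
    intro x _ y _ hxy a b ha hb hab
    have ha' : a = 1 - b := by linarith
    subst ha'
    have hD : y - x ≠ 0 := sub_ne_zero.mpr (Ne.symm hxy)
    have hK : 0 < Kq lam I M (y - x) := Kq_pos lam hlam I M hrated hD
    have hcomb : (1 - b) • x + b • y = x + b • (y - x) := by
      funext i k
      simp only [Pi.add_apply, Pi.smul_apply, Pi.sub_apply, smul_eq_mul]
      ring
    have hfy : loss lam R I y M
        = loss lam R I x M + 2 * (∑ i, ∑ k, (y - x) i k * grad lam R I M x i k)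
          + Kq lam I M (y - x) := by
      have := expansion lam R I M x (y - x)
      rw [show x + (y - x) = y from by abel] at this
      exact this
    simp only [smul_eq_mul]
    rw [hcomb, expansion lam R I M x (b • (y - x)), grad_sum_smul, Kq_smul, hfy]
    nlinarith [mul_pos (mul_pos ha hb) hK]
  refine ⟨sc, ?_⟩
  choose u hu using fun i => exists_sol lam hlam R I M hrated i
  have hgrad0 : ∀ i k, grad lam R I M u i k = 0 := fun i k => by
    unfold grad; rw [sub_eq_zero]; exact hu i k
  have hmin : ∀ V, loss lam R I u M ≤ loss lam R I V M := by
    intro V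
    have hexp := expansion lam R I M u (V - u)
    rw [show u + (V - u) = V from by abel] at hexp
    rw [hexp]
    have hT : ∑ i, ∑ k, (V - u) i k * grad lam R I M u i k = 0 := by
      simp [hgrad0]
    rw [hT]
    have := Kq_nonneg lam hlam.le I M (V - u)
    linarith
  refine ⟨u, ⟨hmin, fun i k => hu i k⟩, ?_⟩
  rintro W ⟨hWmin, hWeq⟩
  by_contra hne
  have heq : loss lam R I W M = loss lam R I u M := le_antisymm (hWmin u) (hmin W)
  have hmid := sc.2 (Set.mem_univ W) (Set.mem_univ u) hne
    (by norm_num : (0:ℝ) < 1/2) (by norm_num : (0:ℝ) < 1/2) (by norm_num)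
  have h2 := hWmin ((1/2 : ℝ) • W + (1/2 : ℝ) • u)
  simp only [smul_eq_mul] at hmid
  linarith
end
end

section
/- Let ḡ = x − P(x) where P(x) performs the exact ALS update of U only (with M fixed, λ > 0). Then −ḡ is a descent direction for L at x unless ḡ = 0: specifically, g^T ḡ ≥ 0 with equality iff ḡ = 0, because ḡ restricted to each user block equals A_i^{-1} times half the user-block gradient, and each A_i is symmetric positive definite. -/
open Finset Filter

noncomputable section

/-- Let ḡ = x − P(x) where P performs the exact ALS update of U
only (M fixed, λ > 0, each user has ratings): its user blocks are
u_i − A_i⁻¹ v_i (here Ustar i = A_i⁻¹ v_i solves the linear system) and its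
movie blocks are zero. Then gᵀḡ ≥ 0 with equality iff ḡ = 0, so −ḡ is a
descent direction for L unless ḡ = 0. The user-block gradient of L is
G_i = 2 λ n_{u_i} u_i + 2 ∑_{j∈I_i} m_j (u_iᵀm_j − r_{ij}). -/
theorem stmt18 {nf nu nm : ℕ} (lam : ℝ) (hlam : 0 < lam)
    (R : Fin nu → Fin nm → ℝ) (I : Finset (Fin nu × Fin nm))
    (hrated : ∀ i : Fin nu, 1 ≤ nRatU I i)
    (U Ustar : Fin nu → Fin nf → ℝ) (M : Fin nm → Fin nf → ℝ)
    (hUstar : ∀ (i : Fin nu) (k : Fin nf),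
      (∑ p ∈ I.filter (fun p => p.1 = i), M p.2 k * dotp (Ustar i) (M p.2))
        + lam * (nRatU I i : ℝ) * Ustar i k
      = ∑ p ∈ I.filter (fun p => p.1 = i), M p.2 k * R i p.2)
    (G : Fin nu → Fin nf → ℝ)
    (hG : ∀ (i : Fin nu) (k : Fin nf),
      G i k = 2 * lam * (nRatU I i : ℝ) * U i k
        + 2 * ∑ p ∈ I.filter (fun p => p.1 = i),
            M p.2 k * (dotp (U i) (M p.2) - R i p.2)) :
    0 ≤ ∑ i, dotp (G i) (U i - Ustar i)
    ∧ ((∑ i, dotp (G i) (U i - Ustar i)) = 0 ↔ ∀ i, U i = Ustar i) := by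
  have hdot : ∀ (i : Fin nu) (j : Fin nm),
      dotp (U i - Ustar i) (M j) = dotp (U i) (M j) - dotp (Ustar i) (M j) := by
    intro i j
    simp [dotp, Pi.sub_apply, sub_mul, Finset.sum_sub_distrib]
  have hGk : ∀ (i : Fin nu) (k : Fin nf),
      G i k = 2 * lam * (nRatU I i : ℝ) * (U i k - Ustar i k)
        + 2 * ∑ p ∈ I.filter (fun p => p.1 = i),
            M p.2 k * dotp (U i - Ustar i) (M p.2) := by
    intro i k
    have h1 := hUstar i k
    have e1 : ∑ p ∈ I.filter (fun p => p.1 = i),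
        M p.2 k * (dotp (U i) (M p.2) - R i p.2)
        = (∑ p ∈ I.filter (fun p => p.1 = i), M p.2 k * dotp (U i) (M p.2))
          - ∑ p ∈ I.filter (fun p => p.1 = i), M p.2 k * R i p.2 := by
      rw [← Finset.sum_sub_distrib]; exact Finset.sum_congr rfl (fun p _ => by ring)
    have e2 : ∑ p ∈ I.filter (fun p => p.1 = i),
        M p.2 k * dotp (U i - Ustar i) (M p.2)
        = (∑ p ∈ I.filter (fun p => p.1 = i), M p.2 k * dotp (U i) (M p.2))
          - ∑ p ∈ I.filter (fun p => p.1 = i), M p.2 k * dotp (Ustar i) (M p.2) := by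
      rw [← Finset.sum_sub_distrib]
      exact Finset.sum_congr rfl (fun p _ => by rw [hdot i p.2]; ring)
    rw [hG i k, e1, e2]
    linarith [h1]
  have key : ∀ i : Fin nu, dotp (G i) (U i - Ustar i)
      = 2 * lam * (nRatU I i : ℝ) * dotp (U i - Ustar i) (U i - Ustar i)
        + 2 * ∑ p ∈ I.filter (fun p => p.1 = i),
            (dotp (U i - Ustar i) (M p.2))^2 := by
    intro i
    have step : ∀ k : Fin nf, G i k * (U i - Ustar i) k
        = 2 * lam * (nRatU I i : ℝ) * ((U i - Ustar i) k * (U i - Ustar i) k)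
          + ∑ p ∈ I.filter (fun p => p.1 = i),
              2 * (M p.2 k * (U i - Ustar i) k * dotp (U i - Ustar i) (M p.2)) := by
      intro k
      rw [hGk i k, add_mul, Finset.mul_sum, Finset.sum_mul]
      simp only [Pi.sub_apply]
      congr 1
      · ring
      · exact Finset.sum_congr rfl (fun p _ => by ring)
    have : dotp (G i) (U i - Ustar i)
        = ∑ k : Fin nf, (2 * lam * (nRatU I i : ℝ) * ((U i - Ustar i) k * (U i - Ustar i) k)
          + ∑ p ∈ I.filter (fun p => p.1 = i),
              2 * (M p.2 k * (U i - Ustar i) k * dotp (U i - Ustar i) (M p.2))) :=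
      Finset.sum_congr rfl (fun k _ => step k)
    rw [this, Finset.sum_add_distrib, Finset.sum_comm]
    congr 1
    · rw [dotp, Finset.mul_sum]
    · rw [Finset.mul_sum]
      refine Finset.sum_congr rfl (fun p _ => ?_)
      have hc : ∑ k : Fin nf, 2 * (M p.2 k * (U i - Ustar i) k * dotp (U i - Ustar i) (M p.2))
          = 2 * dotp (U i - Ustar i) (M p.2)
            * ∑ k : Fin nf, (U i - Ustar i) k * M p.2 k := by
        rw [Finset.mul_sum]
        exact Finset.sum_congr rfl (fun k _ => by ring)
      rw [hc]
      have hd : (∑ k : Fin nf, (U i - Ustar i) k * M p.2 k)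
          = dotp (U i - Ustar i) (M p.2) := rfl
      rw [hd]; ring
  have hnn : ∀ i : Fin nu, 0 ≤ dotp (G i) (U i - Ustar i) := by
    intro i
    rw [key i]
    have h1 : 0 ≤ dotp (U i - Ustar i) (U i - Ustar i) :=
      Finset.sum_nonneg (fun k _ => mul_self_nonneg _)
    have h2 : (0:ℝ) ≤ ∑ p ∈ I.filter (fun p => p.1 = i),
        (dotp (U i - Ustar i) (M p.2))^2 :=
      Finset.sum_nonneg (fun p _ => sq_nonneg _)
    have hn : (0:ℝ) ≤ (nRatU I i : ℝ) := Nat.cast_nonneg _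
    have h3 : 0 ≤ 2 * lam * (nRatU I i : ℝ) * dotp (U i - Ustar i) (U i - Ustar i) := by
      apply mul_nonneg _ h1
      positivity
    linarith
  constructor
  · exact Finset.sum_nonneg (fun i _ => hnn i)
  · constructor
    · intro h i
      have hz : dotp (G i) (U i - Ustar i) = 0 :=
        (Finset.sum_eq_zero_iff_of_nonneg (fun i _ => hnn i)).mp h i (Finset.mem_univ i)
      rw [key i] at hz
      have h2 : (0:ℝ) ≤ ∑ p ∈ I.filter (fun p => p.1 = i),
          (dotp (U i - Ustar i) (M p.2))^2 :=
        Finset.sum_nonneg (fun p _ => sq_nonneg _)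
      have hn : (1:ℝ) ≤ (nRatU I i : ℝ) := by exact_mod_cast hrated i
      have h1 : 0 ≤ dotp (U i - Ustar i) (U i - Ustar i) :=
        Finset.sum_nonneg (fun k _ => mul_self_nonneg _)
      have hpos : 0 < 2 * lam * (nRatU I i : ℝ) := by nlinarith
      have h4 : 0 ≤ 2 * lam * (nRatU I i : ℝ) * dotp (U i - Ustar i) (U i - Ustar i) :=
        mul_nonneg hpos.le h1
      have h5 : 2 * lam * (nRatU I i : ℝ) * dotp (U i - Ustar i) (U i - Ustar i) = 0 := by
        linarith
      have hq : dotp (U i - Ustar i) (U i - Ustar i) = 0 :=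
        (mul_eq_zero.mp h5).resolve_left (ne_of_gt hpos)
      have hk : ∀ k, (U i - Ustar i) k * (U i - Ustar i) k = 0 := fun k =>
        (Finset.sum_eq_zero_iff_of_nonneg
          (fun k _ => mul_self_nonneg ((U i - Ustar i) k))).mp hq k (Finset.mem_univ k)
      funext k
      have h6 : U i k - Ustar i k = 0 := mul_self_eq_zero.mp (hk k)
      linarith
    · intro h
      refine Finset.sum_eq_zero (fun i _ => ?_)
      rw [key i, h i]
      simp [dotp]
end
end
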